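/- Let s ∈ F_{pd} be a p-th syzygy of X ⊂ P^n with (I_X)_d = 0, regarded via the inclusion F_{pd} ↪ Λ^{p−1}V ⊗ (I_X)_{d+1} as s = Σ_α f_α ⊗ v_α in a basis (v_α) of Λ^{p−1}V. Then the vanishing locus of the twisted (p−1)-form associated to s equals the common vanishing locus V(I(s)) of the polynomials f_α, i.e., Syz(s) = V(I(s)). -/

import Mathlib

set_option synthInstance.maxHeartbeats 400000

open scoped TensorProduct
open MvPolynomial

noncomputable section

/-!
STATEMENT 7: Let s ∈ F_{pd} be a p-th syzygy of X ⊂ ℙⁿ with (I_X)_d = 0,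
regarded via the inclusion F_{pd} ↪ Λ^{p-1}V ⊗ (I_X)_{d+1} as
s = Σ_α v_α ⊗ f_α in a basis (v_α) of Λ^{p-1}V (V = H⁰(ℙⁿ,O(1)), modelled as
a complex vector space, with the polynomials f_α ∈ (I_X)_{d+1}).  Then the
vanishing locus of the twisted (p-1)-form associated to s — the locus of x
where the evaluation (id ⊗ eval_x)(s) ∈ Λ^{p-1}V vanishes — equals the common
vanishing locus V(I(s)) of the coefficient polynomials f_α.
-/
theorem syzygy_scheme_eq_vanishing_of_syzygy_ideal
    {V : Type*} [AddCommGroup V] [Module ℂ V] [FiniteDimensional ℂ V]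
    {n d p : ℕ} {ι : Type*} [Fintype ι]
    (I : Ideal (MvPolynomial (Fin (n + 1)) ℂ))
    (hId : ∀ g ∈ I, g.IsHomogeneous d → g = 0)
    (β : Module.Basis ι ℂ (⋀[ℂ]^(p - 1) V))
    (f : ι → MvPolynomial (Fin (n + 1)) ℂ)
    (hf : ∀ α, f α ∈ I ∧ (f α).IsHomogeneous (d + 1))
    (s : (⋀[ℂ]^(p - 1) V) ⊗[ℂ] MvPolynomial (Fin (n + 1)) ℂ)
    (hs : s = ∑ α, β α ⊗ₜ f α) :
    {x : Fin (n + 1) → ℂ |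
        TensorProduct.map LinearMap.id (MvPolynomial.aeval x).toLinearMap s = 0}
      = {x : Fin (n + 1) → ℂ | ∀ α, MvPolynomial.eval x (f α) = 0} := by
  subst hs
  ext x
  simp only [Set.mem_setOf_eq, map_sum, TensorProduct.map_tmul,
    LinearMap.id_coe, id_eq, AlgHom.toLinearMap_apply]
  have key : (∑ α, β α ⊗ₜ[ℂ] (MvPolynomial.aeval x) (f α)) =
      ∑ α, (MvPolynomial.eval x (f α)) • (β α ⊗ₜ[ℂ] (1 : ℂ)) := by
    refine Finset.sum_congr rfl fun α _ => ?_
    rw [← TensorProduct.tmul_smul]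
    congr 1
    rw [smul_eq_mul, mul_one, ← MvPolynomial.coe_aeval_eq_eval]
    rfl
  rw [key]
  constructor
  · intro h α
    have h2 : (TensorProduct.rid ℂ (⋀[ℂ]^(p - 1) V))
        (∑ α, (MvPolynomial.eval x (f α)) • (β α ⊗ₜ[ℂ] (1 : ℂ))) = 0 := by
      rw [h]; simp
    simp only [map_sum, map_smul, TensorProduct.rid_tmul, one_smul] at h2
    have := linearIndependent_iff'.mp β.linearIndependent Finset.univ
      (fun α => MvPolynomial.eval x (f α)) h2 α (Finset.mem_univ α)
    exact this
  · intro h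
    refine Finset.sum_eq_zero fun α _ => ?_
    rw [h α, zero_smul]


end
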